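/- arXiv:1103.3958 — 6 statements merged into one kernel-verified Lean document; each statement's English description precedes it below -/
import Mathlib

section
/- For all real numbers t > 0 and x > 0, with d = 2 and γ = 2/π, the length density of the typical I-segment of a stationary and isotropic planar STIT tessellation with time parameter t satisfies ∫₀ᵗ (2/π)·s·e^{−(2/π)·s·x} · (2s/t²) ds = (1/(t²·x³)) · (π² − (π² + 2π·t·x + 2t²·x²)·e^{−(2/π)·t·x}). -/
open MeasureTheory Real

/-- Explicit planar (`d = 2`, `γ = 2/π`) length density of the typical
I-segment of a stationary and isotropic STIT tessellation:
`p₂(x) = (1/(t² x³)) (π² − (π² + 2π t x + 2 t² x²) e^{−(2/π) t x})`. -/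
theorem stit_Isegment_density_planar (t x : ℝ) (ht : 0 < t) (hx : 0 < x) :
    (∫ s in (0:ℝ)..t, (2 / Real.pi) * s * Real.exp (-((2 / Real.pi) * s * x)) * (2 * s / t ^ 2))
      = (1 / (t ^ 2 * x ^ 3)) *
        (Real.pi ^ 2 -
          (Real.pi ^ 2 + 2 * Real.pi * t * x + 2 * t ^ 2 * x ^ 2) *
            Real.exp (-((2 / Real.pi) * t * x))) := by
  have hπ : (0:ℝ) < Real.pi := Real.pi_pos
  set c : ℝ := 2 / Real.pi * x with hc
  have hc0 : (0:ℝ) < c := by positivity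
  set F : ℝ → ℝ := fun s =>
    -((4 / (Real.pi * t ^ 2)) * (Real.exp (-(c * s)) * (s ^ 2 / c + 2 * s / c ^ 2 + 2 / c ^ 3)))
    with hF
  have hderiv : ∀ s ∈ Set.uIcc (0:ℝ) t,
      HasDerivAt F ((2 / Real.pi) * s * Real.exp (-((2 / Real.pi) * s * x)) * (2 * s / t ^ 2)) s := by
    intro s _
    have h1 : HasDerivAt (fun s : ℝ => -(c * s)) (-c) s := by
      simpa using ((hasDerivAt_id s).const_mul c).fun_neg
    have h2 := h1.exp
    have h3 : HasDerivAt (fun s : ℝ => s ^ 2 / c + 2 * s / c ^ 2 + 2 / c ^ 3)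
        (2 * s / c + 2 / c ^ 2) s := by
      have hp : HasDerivAt (fun s : ℝ => s ^ 2) (2 * s) s := by
        simpa using hasDerivAt_pow 2 s
      have := ((hp.div_const c).add (((hasDerivAt_id s).const_mul 2).div_const (c ^ 2))).add_const
        (2 / c ^ 3)
      simpa [mul_comm] using this
    have h4 := ((h2.fun_mul h3).const_mul (4 / (Real.pi * t ^ 2))).fun_neg
    refine h4.congr_deriv ?_
    have he : Real.exp (-((2 / Real.pi) * s * x)) = Real.exp (-(c * s)) := by
      rw [hc]; ring_nf
    rw [he]
    field_simp
    ring
  have hint : IntervalIntegrable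
      (fun s => (2 / Real.pi) * s * Real.exp (-((2 / Real.pi) * s * x)) * (2 * s / t ^ 2))
      MeasureTheory.volume 0 t := by
    apply Continuous.intervalIntegrable
    continuity
  rw [intervalIntegral.integral_eq_sub_of_hasDerivAt hderiv hint]
  have he : Real.exp (-((2 / Real.pi) * t * x)) = Real.exp (-(c * t)) := by
    rw [hc]; ring_nf
  rw [he, hF]
  simp only
  have hx0 : x ≠ 0 := ne_of_gt hx
  have ht0 : t ≠ 0 := ne_of_gt ht
  have hπ0 : Real.pi ≠ 0 := ne_of_gt hπ
  have hc' : c ≠ 0 := ne_of_gt hc0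
  rw [hc]
  simp only [mul_zero, neg_zero, Real.exp_zero]
  field_simp
  ring
end

section
/- For every real t > 0, the mean length of the typical I-segment of a stationary and isotropic planar STIT tessellation with time parameter t equals π/t; that is, with p₂(x) = ∫₀ᵗ (2/π)·s·e^{−(2/π)·s·x} · (2s/t²) ds, the function x ↦ x·p₂(x) is integrable on (0,∞) and ∫₀^∞ x·p₂(x) dx = π/t. -/
open MeasureTheory Real

lemma my_int_on (a : ℝ) (ha : 0 < a) :
    IntegrableOn (fun x : ℝ => x * Real.exp (-(a * x))) (Set.Ioi 0) := by
  have h := integrableOn_rpow_mul_exp_neg_mul_rpow (s := 1) (p := 1) (b := a)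
    (by norm_num) zero_lt_one ha
  refine h.congr_fun (fun x hx => ?_) measurableSet_Ioi
  simp [Real.rpow_natCast, neg_mul]

lemma my_int_val (a : ℝ) (ha : 0 < a) :
    ∫ x in Set.Ioi (0:ℝ), x * Real.exp (-(a * x)) = 1 / a ^ 2 := by
  have h := integral_rpow_mul_exp_neg_mul_Ioi (a := 2) (r := a) (by norm_num) ha
  rw [show ((2:ℝ) - 1) = 1 by norm_num] at h
  simp only [Real.rpow_one] at h
  rw [h, Real.Gamma_two, mul_one, Real.rpow_two, div_pow, one_pow]

/-- The mean length of the typical I-segment of a stationary and isotropic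
planar STIT tessellation with time parameter `t` equals `π / t`. -/
theorem stit_Isegment_mean_length_planar (t : ℝ) (ht : 0 < t) :
    MeasureTheory.IntegrableOn
      (fun x : ℝ => x *
        ∫ s in (0:ℝ)..t, (2 / Real.pi) * s * Real.exp (-((2 / Real.pi) * s * x)) * (2 * s / t ^ 2))
      (Set.Ioi 0) ∧
    (∫ x in Set.Ioi (0:ℝ), x *
        ∫ s in (0:ℝ)..t, (2 / Real.pi) * s * Real.exp (-((2 / Real.pi) * s * x)) * (2 * s / t ^ 2))
      = Real.pi / t := by
  have hπ := Real.pi_pos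
  set c : ℝ := 2 / Real.pi with hc_def
  have hc : 0 < c := by positivity
  set f : ℝ → ℝ → ℝ := fun s x => x * (c * s * Real.exp (-(c * s * x)) * (2 * s / t ^ 2))
    with hf
  -- measures
  set ν := volume.restrict (Set.Ioc (0:ℝ) t) with hν
  set μ := volume.restrict (Set.Ioi (0:ℝ)) with hμ
  -- slice integrability and value
  have hslice : ∀ s : ℝ, 0 < s → IntegrableOn (fun x => f s x) (Set.Ioi 0) := by
    intro s hs
    have h := (my_int_on (c * s) (by positivity)).const_mul (c * s * (2 * s / t ^ 2))
    refine IntegrableOn.congr_fun h (fun x hx => ?_) measurableSet_Ioi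
    simp only [hf]; ring_nf
  have hval : ∀ s : ℝ, 0 < s → ∫ x in Set.Ioi (0:ℝ), f s x = 2 / (c * t ^ 2) := by
    intro s hs
    have h1 : ∫ x in Set.Ioi (0:ℝ), f s x
        = (c * s * (2 * s / t ^ 2)) * ∫ x in Set.Ioi (0:ℝ), x * Real.exp (-(c * s * x)) := by
      rw [← integral_const_mul]
      refine setIntegral_congr_fun measurableSet_Ioi (fun x hx => ?_)
      simp only [hf]; ring
    rw [h1, my_int_val (c * s) (by positivity)]
    field_simp
  -- integrability on the product
  have hcont : Continuous (Function.uncurry f) := by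
    simp only [hf, Function.uncurry]
    fun_prop
  have hprod : Integrable (Function.uncurry f) (ν.prod μ) := by
    rw [MeasureTheory.integrable_prod_iff (hcont.aestronglyMeasurable)]
    constructor
    · refine (ae_restrict_iff' measurableSet_Ioc).2 (Filter.Eventually.of_forall ?_)
      intro s hs
      exact hslice s hs.1
    · have hae : (fun s => ∫ x, ‖f s x‖ ∂μ) =ᶠ[ae ν] (fun _ => 2 / (c * t ^ 2)) := by
        refine (ae_restrict_iff' measurableSet_Ioc).2 (Filter.Eventually.of_forall ?_)
        intro s hs
        have hs0 : 0 < s := hs.1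
        have hnn : ∫ x, ‖f s x‖ ∂μ = ∫ x in Set.Ioi (0:ℝ), f s x := by
          rw [hμ]
          refine setIntegral_congr_fun measurableSet_Ioi (fun x hx => ?_)
          have hxpos : (0:ℝ) < x := hx
          have hxp : (0:ℝ) < x := hx
          have hfnn : 0 ≤ f s x := by
            simp only [hf]
            positivity
          exact Real.norm_of_nonneg hfnn
        show ∫ x, ‖f s x‖ ∂μ = 2 / (c * t ^ 2)
        rw [hnn, hval s hs0]
      exact (integrable_const _).congr hae.symm
  -- rewrite the target function
  have hkey : ∀ x : ℝ, (x *
      ∫ s in (0:ℝ)..t, c * s * Real.exp (-(c * s * x)) * (2 * s / t ^ 2))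
      = ∫ s, f s x ∂ν := by
    intro x
    rw [intervalIntegral.integral_of_le ht.le, ← integral_const_mul]
  constructor
  · have h1 := hprod.integral_prod_right
    refine h1.congr (Filter.Eventually.of_forall (fun x => ?_))
    exact (hkey x).symm
  · have hswap := MeasureTheory.integral_integral_swap (f := f) hprod
    calc (∫ x in Set.Ioi (0:ℝ), x *
        ∫ s in (0:ℝ)..t, c * s * Real.exp (-(c * s * x)) * (2 * s / t ^ 2))
        = ∫ x, ∫ s, f s x ∂ν ∂μ := by
          refine setIntegral_congr_fun measurableSet_Ioi (fun x _ => ?_)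
          rw [hkey x]
      _ = ∫ s, ∫ x, f s x ∂μ ∂ν := hswap.symm
      _ = ∫ s in Set.Ioc (0:ℝ) t, (2 / (c * t ^ 2)) := by
          refine setIntegral_congr_fun measurableSet_Ioc (fun s hs => ?_)
          exact hval s hs.1
      _ = t * (2 / (c * t ^ 2)) := by
          rw [setIntegral_const, Real.volume_real_Ioc, smul_eq_mul,
            max_eq_left (by linarith)]
          ring_nf
      _ = Real.pi / t := by
          rw [hc_def]
          field_simp
end

section
/- For every real t > 0, the mean length of the typical I-segment of a stationary and isotropic spatial STIT tessellation with time parameter t equals 3/t; that is, with p₃(x) = ∫₀ᵗ (1/2)·s·e^{−(1/2)·s·x} · (3s²/t³) ds, the function x ↦ x·p₃(x) is integrable on (0,∞) and ∫₀^∞ x·p₃(x) dx = 3/t. -/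
open MeasureTheory Real

lemma aux_integrableOn {a : ℝ} (ha : 0 < a) :
    MeasureTheory.IntegrableOn (fun x : ℝ => x * Real.exp (-(a * x))) (Set.Ioi 0) := by
  have h := integrableOn_rpow_mul_exp_neg_mul_rpow (s := 1) (p := 1)
    (by norm_num) one_pos ha
  simp only [Real.rpow_one, neg_mul] at h
  exact h

lemma aux_integral {a : ℝ} (ha : 0 < a) :
    (∫ x in Set.Ioi (0:ℝ), x * Real.exp (-(a * x))) = 1 / a ^ 2 := by
  have h := integral_rpow_mul_exp_neg_mul_Ioi (a := 2) (r := a) two_pos ha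
  have h2 : Real.Gamma 2 = 1 := by
    have := Real.Gamma_nat_eq_factorial 1
    norm_num at this
    convert this using 2
    norm_num
  rw [h2, mul_one] at h
  have hL : (∫ x in Set.Ioi (0:ℝ), x ^ ((2:ℝ) - 1) * Real.exp (-(a * x)))
      = ∫ x in Set.Ioi (0:ℝ), x * Real.exp (-(a * x)) := by
    refine setIntegral_congr_fun measurableSet_Ioi (fun x hx => ?_)
    norm_num
  rw [hL] at h
  rw [h]
  rw [show ((2:ℝ)) = ((2:ℕ):ℝ) by norm_num, Real.rpow_natCast]
  field_simp

/-- The mean length of the typical I-segment of a stationary and isotropic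
spatial STIT tessellation with time parameter `t` equals `3 / t`. -/
theorem stit_Isegment_mean_length_spatial (t : ℝ) (ht : 0 < t) :
    MeasureTheory.IntegrableOn
      (fun x : ℝ => x *
        ∫ s in (0:ℝ)..t, (1 / 2) * s * Real.exp (-((1 / 2) * s * x)) * (3 * s ^ 2 / t ^ 3))
      (Set.Ioi 0) ∧
    (∫ x in Set.Ioi (0:ℝ), x *
        ∫ s in (0:ℝ)..t, (1 / 2) * s * Real.exp (-((1 / 2) * s * x)) * (3 * s ^ 2 / t ^ 3))
      = 3 / t := by
  set μ : Measure ℝ := volume.restrict (Set.Ioc 0 t) with hμ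
  set ν : Measure ℝ := volume.restrict (Set.Ioi 0) with hν
  set F : ℝ × ℝ → ℝ := fun p =>
    p.2 * ((1 / 2) * p.1 * Real.exp (-((1 / 2) * p.1 * p.2)) * (3 * p.1 ^ 2 / t ^ 3)) with hF
  -- key per-s computation
  have key : ∀ s ∈ Set.Ioc (0:ℝ) t,
      (∫ x in Set.Ioi (0:ℝ), F (s, x)) = 6 * s / t ^ 3 := by
    intro s hs
    have hs0 : 0 < s := hs.1
    have hEq : ∀ x ∈ Set.Ioi (0:ℝ),
        F (s, x) = (3 * s ^ 3 / (2 * t ^ 3)) * (x * Real.exp (-(s / 2 * x))) := by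
      intro x hx
      simp only [hF]
      have : -((1:ℝ) / 2 * s * x) = -(s / 2 * x) := by ring
      rw [this]
      ring
    rw [setIntegral_congr_fun measurableSet_Ioi hEq, integral_const_mul,
      aux_integral (half_pos hs0)]
    field_simp
    ring
  have hsec : ∀ s ∈ Set.Ioc (0:ℝ) t,
      MeasureTheory.IntegrableOn (fun x => F (s, x)) (Set.Ioi 0) := by
    intro s hs
    have h : MeasureTheory.IntegrableOn
        (fun x : ℝ => (3 * s ^ 3 / (2 * t ^ 3)) * (x * Real.exp (-(s / 2 * x))))
        (Set.Ioi 0) :=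
      (aux_integrableOn (half_pos hs.1)).const_mul (3 * s ^ 3 / (2 * t ^ 3))
    refine h.congr_fun (fun x hx => ?_) measurableSet_Ioi
    simp only [hF]
    have : -(s / 2 * x) = -((1:ℝ) / 2 * s * x) := by ring
    rw [this]
    ring
  have hFnn : ∀ s ∈ Set.Ioc (0:ℝ) t, ∀ x ∈ Set.Ioi (0:ℝ), 0 ≤ F (s, x) := by
    intro s hs x hx
    have hs0 : 0 < s := hs.1
    have hx0 : 0 < x := hx
    have := Real.exp_pos (-((1:ℝ) / 2 * s * x))
    simp only [hF]
    positivity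
  have hnorm : ∀ s ∈ Set.Ioc (0:ℝ) t,
      (∫ x, ‖F (s, x)‖ ∂ν) = 6 * s / t ^ 3 := by
    intro s hs
    rw [hν, ← key s hs]
    refine setIntegral_congr_fun measurableSet_Ioi (fun x hx => ?_)
    exact Real.norm_of_nonneg (hFnn s hs x hx)
  -- product integrability
  have hconts : Continuous F := by
    simp only [hF]
    fun_prop
  have hmeas : AEStronglyMeasurable F (μ.prod ν) :=
    hconts.aestronglyMeasurable
  have hprod : Integrable F (μ.prod ν) := by
    rw [MeasureTheory.integrable_prod_iff hmeas]
    constructor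
    · rw [ae_restrict_iff' measurableSet_Ioc]
      exact Filter.Eventually.of_forall (fun s hs => hsec s hs)
    · have hg : MeasureTheory.IntegrableOn (fun s : ℝ => 6 * s / t ^ 3) (Set.Ioc 0 t) := by
        apply Continuous.integrableOn_Ioc
        fun_prop
      refine hg.congr ?_
      filter_upwards [ae_restrict_mem measurableSet_Ioc] with s hs using (hnorm s hs).symm
  -- the stated function equals x ↦ ∫ s, F (s, x) ∂μ
  have hfun : ∀ x : ℝ,
      (x * ∫ s in (0:ℝ)..t, (1 / 2) * s * Real.exp (-((1 / 2) * s * x)) * (3 * s ^ 2 / t ^ 3))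
        = ∫ s, F (s, x) ∂μ := by
    intro x
    rw [intervalIntegral.integral_of_le ht.le]
    rw [hμ, hF]
    exact (integral_const_mul x _).symm
  constructor
  · have h1 := hprod.integral_prod_right
    refine h1.congr ?_
    exact Filter.Eventually.of_forall (fun x => (hfun x).symm)
  · have hswap := MeasureTheory.integral_integral_swap
      (f := fun s x => F (s, x)) (μ := μ) (ν := ν) hprod
    calc (∫ x in Set.Ioi (0:ℝ), x *
          ∫ s in (0:ℝ)..t, (1 / 2) * s * Real.exp (-((1 / 2) * s * x)) * (3 * s ^ 2 / t ^ 3))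
        = ∫ x, ∫ s, F (s, x) ∂μ ∂ν := by
          rw [hν]; exact setIntegral_congr_fun measurableSet_Ioi (fun x _ => hfun x)
      _ = ∫ s, ∫ x, F (s, x) ∂ν ∂μ := hswap.symm
      _ = ∫ s in Set.Ioc (0:ℝ) t, (6 * s / t ^ 3) := by
          rw [hμ]
          exact setIntegral_congr_fun measurableSet_Ioc (fun s hs => by
            rw [hν]; exact key s hs)
      _ = 3 / t := by
          rw [← intervalIntegral.integral_of_le ht.le]
          have : (∫ s in (0:ℝ)..t, 6 * s / t ^ 3)
              = (∫ s in (0:ℝ)..t, s) * (6 / t ^ 3) := by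
            rw [← intervalIntegral.integral_mul_const]
            congr 1 with s
            ring
          rw [this, integral_id]
          field_simp
          ring
end

section
/- For every real t > 0, the second moment of the length of the typical I-segment of a stationary and isotropic spatial STIT tessellation with time parameter t equals 24/t²; that is, with p₃(x) = ∫₀ᵗ (1/2)·s·e^{−(1/2)·s·x} · (3s²/t³) ds, the function x ↦ x²·p₃(x) is integrable on (0,∞) and ∫₀^∞ x²·p₃(x) dx = 24/t². -/
open MeasureTheory Real

lemma stit_aux_int {s : ℝ} (hs : 0 < s) :
    IntegrableOn (fun x : ℝ => x ^ 2 * Real.exp (-((1 / 2) * s * x))) (Set.Ioi 0) := by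
  have h := integrableOn_rpow_mul_exp_neg_mul_rpow (p := 1) (s := 2) (b := s / 2)
    (by norm_num) (by norm_num) (by positivity)
  refine h.congr_fun (fun x hx => ?_) measurableSet_Ioi
  dsimp only; rw [Real.rpow_one, Real.rpow_two]
  ring_nf

lemma stit_aux_val {s : ℝ} (hs : 0 < s) :
    ∫ x in Set.Ioi (0:ℝ), x ^ 2 * Real.exp (-((1 / 2) * s * x)) = 16 / s ^ 3 := by
  have h := Real.integral_rpow_mul_exp_neg_mul_Ioi (a := 3) (r := s / 2)
    (by norm_num) (by positivity)
  have heq : ∫ x in Set.Ioi (0:ℝ), x ^ 2 * Real.exp (-((1 / 2) * s * x))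
      = ∫ x in Set.Ioi (0:ℝ), x ^ ((3:ℝ) - 1) * Real.exp (-(s / 2 * x)) := by
    refine setIntegral_congr_fun measurableSet_Ioi (fun x hx => ?_)
    rw [show (3:ℝ) - 1 = (2:ℕ) by norm_num, Real.rpow_natCast]
    ring_nf
  rw [heq, h, show (3:ℝ) = (2:ℕ) + 1 by norm_num, Real.Gamma_nat_eq_factorial,
    show ((2:ℕ):ℝ) + 1 = ((3:ℕ):ℝ) by push_cast; ring, Real.rpow_natCast]
  field_simp
  ring

/-- The second moment of the length of the typical I-segment of a stationary
and isotropic spatial STIT tessellation with time parameter `t` equals `24/t²`. -/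
theorem stit_Isegment_second_moment_spatial (t : ℝ) (ht : 0 < t) :
    MeasureTheory.IntegrableOn
      (fun x : ℝ => x ^ 2 *
        ∫ s in (0:ℝ)..t, (1 / 2) * s * Real.exp (-((1 / 2) * s * x)) * (3 * s ^ 2 / t ^ 3))
      (Set.Ioi 0) ∧
    (∫ x in Set.Ioi (0:ℝ), x ^ 2 *
        ∫ s in (0:ℝ)..t, (1 / 2) * s * Real.exp (-((1 / 2) * s * x)) * (3 * s ^ 2 / t ^ 3))
      = 24 / t ^ 2 := by
  set f : ℝ → ℝ → ℝ := fun x s =>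
    x ^ 2 * ((1 / 2) * s * Real.exp (-((1 / 2) * s * x)) * (3 * s ^ 2 / t ^ 3)) with hf
  set μ := volume.restrict (Set.Ioi (0:ℝ)) with hμ
  set ν := volume.restrict (Set.Ioc (0:ℝ) t) with hν
  -- rewrite the function of x
  have hfun : (fun x : ℝ => x ^ 2 *
        ∫ s in (0:ℝ)..t, (1 / 2) * s * Real.exp (-((1 / 2) * s * x)) * (3 * s ^ 2 / t ^ 3))
      = fun x => ∫ s, f x s ∂ν := by
    funext x
    rw [intervalIntegral.integral_of_le ht.le, ← integral_const_mul]
  -- for fixed s > 0 : integrability and value of the inner x-integral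
  have hIx : ∀ s : ℝ, 0 < s → Integrable (fun x => f x s) μ := by
    intro s hs
    have h1 : IntegrableOn
        (fun x : ℝ => (1 / 2) * s * (3 * s ^ 2 / t ^ 3) *
          (x ^ 2 * Real.exp (-((1 / 2) * s * x)))) (Set.Ioi 0) :=
      (stit_aux_int hs).const_mul _
    exact h1.congr_fun (fun x hx => by simp only [hf]; ring) measurableSet_Ioi
  have hVx : ∀ s : ℝ, 0 < s → ∫ x, f x s ∂μ = 24 / t ^ 3 := by
    intro s hs
    have : ∫ x, f x s ∂μ
        = ((1 / 2) * s * (3 * s ^ 2 / t ^ 3)) * ∫ x in Set.Ioi (0:ℝ),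
            x ^ 2 * Real.exp (-((1 / 2) * s * x)) := by
      rw [← integral_const_mul]
      exact setIntegral_congr_fun measurableSet_Ioi (fun x hx => by ring)
    rw [this, stit_aux_val hs]
    field_simp
    ring
  -- nonnegativity
  have hnn : ∀ s ∈ Set.Ioc (0:ℝ) t, ∀ x : ℝ, 0 ≤ f x s := by
    intro s hs x
    have h1 : (0:ℝ) ≤ x ^ 2 := sq_nonneg x
    have h2 : (0:ℝ) < s := hs.1
    positivity
  -- product integrability
  have hcont : Continuous (Function.uncurry f) := by
    apply Continuous.mul (by fun_prop)
    apply Continuous.mul (by fun_prop)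
    fun_prop
  have hprod : Integrable (Function.uncurry f) (μ.prod ν) := by
    rw [integrable_prod_iff' hcont.aestronglyMeasurable]
    constructor
    · filter_upwards [ae_restrict_mem measurableSet_Ioc] with s hs
      exact hIx s hs.1
    · have hconst : Integrable (fun _ : ℝ => (24:ℝ) / t ^ 3) ν := by
        apply integrable_const
      refine hconst.congr ?_
      filter_upwards [ae_restrict_mem measurableSet_Ioc] with s hs
      calc (24:ℝ) / t ^ 3 = ∫ x, f x s ∂μ := (hVx s hs.1).symm
        _ = ∫ x, ‖f x s‖ ∂μ := by
            refine integral_congr_ae ?_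
            filter_upwards [ae_restrict_mem measurableSet_Ioi] with x hx
            exact (Real.norm_of_nonneg (hnn s hs x)).symm
  constructor
  · rw [hfun]
    exact hprod.integral_prod_left
  · rw [hfun, show (∫ x in Set.Ioi (0:ℝ), ∫ s, f x s ∂ν) = ∫ x, ∫ s, f x s ∂ν ∂μ from rfl,
      integral_integral_swap hprod]
    have : ∫ s, (∫ x, f x s ∂μ) ∂ν = ∫ s in Set.Ioc (0:ℝ) t, (24:ℝ) / t ^ 3 := by
      refine setIntegral_congr_fun measurableSet_Ioc (fun s hs => hVx s hs.1)
    rw [this, setIntegral_const, Real.volume_real_Ioc]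
    rw [max_eq_left (by linarith), smul_eq_mul]
    field_simp
    ring
end

section
/- For every integer d ≥ 2 and all real numbers t > 0 and γ > 0, the d-th moment of the typical I-segment length does not exist: with p_d(x) = ∫₀ᵗ γ·s·e^{−γ·s·x} · (d·s^{d−1}/t^d) ds, the function x ↦ x^d·p_d(x) is not integrable on (0,∞). -/
open MeasureTheory Real

/-- The `d`-th moment of the typical I-segment length does not exist:
`x ↦ x^d · p_d(x)` is not integrable on `(0, ∞)`. -/
theorem stit_Isegment_dth_moment_not_integrable
    (d : ℕ) (hd : 2 ≤ d) (t γ : ℝ) (ht : 0 < t) (hγ : 0 < γ) :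
    ¬ MeasureTheory.IntegrableOn
      (fun x : ℝ => x ^ d *
        ∫ s in (0:ℝ)..t, γ * s * Real.exp (-(γ * s * x)) * (d * s ^ (d - 1) / t ^ d))
      (Set.Ioi 0) := by
  intro h
  set f : ℝ → ℝ := fun x : ℝ => x ^ d *
      ∫ s in (0:ℝ)..t, γ * s * Real.exp (-(γ * s * x)) * (d * s ^ (d - 1) / t ^ d) with hf
  set x0 : ℝ := (γ * t)⁻¹ with hx0def
  have hx0 : 0 < x0 := by positivity
  have hd0 : (0:ℝ) < d := by exact_mod_cast lt_of_lt_of_le two_pos hd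
  set K : ℝ := γ * Real.exp (-1) * d / t ^ d * γ⁻¹ ^ (d + 1) / (d + 1) with hK
  have hKpos : 0 < K := by positivity
  -- key lower bound
  have hbound : ∀ x : ℝ, x ∈ Set.Ioi x0 → K * x⁻¹ ≤ f x := by
    intro x hx
    have hxpos : 0 < x := lt_trans hx0 hx
    set a : ℝ := (γ * x)⁻¹ with ha
    have hapos : 0 < a := by positivity
    have hat : a ≤ t := by
      rw [ha, inv_le_comm₀ (by positivity) ht]
      have : (γ * t)⁻¹ < x := hx
      calc t⁻¹ = γ * (γ * t)⁻¹ := by field_simp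
        _ ≤ γ * x := by nlinarith
    have hcont : Continuous fun s : ℝ =>
        γ * s * Real.exp (-(γ * s * x)) * (d * s ^ (d - 1) / t ^ d) := by fun_prop
    have hcont2 : Continuous fun s : ℝ =>
        γ * s * Real.exp (-1) * (d * s ^ (d - 1) / t ^ d) := by fun_prop
    -- step A : restrict integration to [0, a]
    have stepA : (∫ s in (0:ℝ)..a, γ * s * Real.exp (-(γ * s * x)) * (d * s ^ (d - 1) / t ^ d))
        ≤ ∫ s in (0:ℝ)..t, γ * s * Real.exp (-(γ * s * x)) * (d * s ^ (d - 1) / t ^ d) := by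
      apply intervalIntegral.integral_mono_interval le_rfl hapos.le hat
      · filter_upwards [ae_restrict_mem measurableSet_Ioc] with s hs
        have hs0 : 0 ≤ s := le_of_lt hs.1
        positivity
      · exact hcont.intervalIntegrable _ _
    -- step B : on [0,a], exp(-(γ s x)) ≥ exp (-1)
    have stepB : (∫ s in (0:ℝ)..a, γ * s * Real.exp (-1) * (d * s ^ (d - 1) / t ^ d))
        ≤ ∫ s in (0:ℝ)..a, γ * s * Real.exp (-(γ * s * x)) * (d * s ^ (d - 1) / t ^ d) := by
      apply intervalIntegral.integral_mono_on hapos.le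
        (hcont2.intervalIntegrable _ _) (hcont.intervalIntegrable _ _)
      intro s hs
      have hs0 : 0 ≤ s := hs.1
      have hsx : γ * s * x ≤ 1 := by
        have : s ≤ (γ * x)⁻¹ := hs.2
        calc γ * s * x = (γ * x) * s := by ring
          _ ≤ (γ * x) * (γ * x)⁻¹ := by
              apply mul_le_mul_of_nonneg_left this (by positivity)
          _ = 1 := by field_simp
      have : Real.exp (-1) ≤ Real.exp (-(γ * s * x)) := by
        apply Real.exp_le_exp.mpr; linarith
      have h1 : 0 ≤ γ * s := by positivity
      have h2 : 0 ≤ (d:ℝ) * s ^ (d - 1) / t ^ d := by positivity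
      nlinarith [mul_le_mul_of_nonneg_left this h1]
    -- step C : compute the lower integral
    have hpow : ∀ s : ℝ, γ * s * Real.exp (-1) * (d * s ^ (d - 1) / t ^ d)
        = (γ * Real.exp (-1) * d / t ^ d) * s ^ d := by
      intro s
      have : s ^ d = s * s ^ (d - 1) := by
        conv_lhs => rw [show d = (d - 1) + 1 by omega]
        rw [pow_succ]; ring
      rw [this]; ring
    have stepC : (∫ s in (0:ℝ)..a, γ * s * Real.exp (-1) * (d * s ^ (d - 1) / t ^ d))
        = (γ * Real.exp (-1) * d / t ^ d) * (a ^ (d + 1) / (d + 1)) := by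
      simp_rw [hpow]
      rw [intervalIntegral.integral_const_mul, integral_pow]
      norm_num
    -- combine
    have hIle : (γ * Real.exp (-1) * d / t ^ d) * (a ^ (d + 1) / (d + 1))
        ≤ ∫ s in (0:ℝ)..t, γ * s * Real.exp (-(γ * s * x)) * (d * s ^ (d - 1) / t ^ d) := by
      rw [← stepC]; exact le_trans stepB stepA
    have hxa : x ^ d * a ^ (d + 1) = γ⁻¹ ^ (d + 1) * x⁻¹ := by
      have key : x ^ d * x⁻¹ ^ d = 1 := by
        rw [← mul_pow, mul_inv_cancel₀ hxpos.ne', one_pow]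
      rw [ha, mul_inv, mul_pow, pow_succ]
      linear_combination (γ⁻¹ ^ (d + 1) * x⁻¹) * key
    calc K * x⁻¹ = x ^ d * ((γ * Real.exp (-1) * d / t ^ d) * (a ^ (d + 1) / (d + 1))) := by
          have key : x ^ d * x⁻¹ ^ d = 1 := by
            rw [← mul_pow, mul_inv_cancel₀ hxpos.ne', one_pow]
          rw [hK, ha]
          linear_combination (-(γ * Real.exp (-1) * (d:ℝ) / t ^ d * γ⁻¹ ^ (d + 1) /
            ((d:ℝ) + 1) * x⁻¹)) * key
      _ ≤ f x := by
          apply mul_le_mul_of_nonneg_left hIle (by positivity)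
  -- derive contradiction
  have h1 : IntegrableOn f (Set.Ioi x0) := h.mono_set (Set.Ioi_subset_Ioi hx0.le)
  have h2 : IntegrableOn (fun x : ℝ => K * x⁻¹) (Set.Ioi x0) := by
    apply Integrable.mono' h1
    · exact (measurable_const.mul measurable_inv).aestronglyMeasurable
    · rw [ae_restrict_iff' measurableSet_Ioi]
      filter_upwards with x hx
      have hxpos : 0 < x := lt_trans hx0 hx
      rw [Real.norm_eq_abs, abs_of_nonneg (by positivity)]
      exact hbound x hx
  have h3 : IntegrableOn (fun x : ℝ => x⁻¹) (Set.Ioi x0) := by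
    have := h2.const_mul K⁻¹
    simpa [IntegrableOn, mul_assoc, ← mul_assoc, inv_mul_cancel₀ hKpos.ne'] using this
  exact not_IntegrableOn_Ioi_inv h3
end

section
/- For every integer d ≥ 2 and all real numbers t > 0 and γ > 0, the length density of the typical I-segment has the power-law tail asymptotics x^{d+1}·p_d(x) → d·d!/(γ·t)^d as x → ∞, where p_d(x) = ∫₀ᵗ γ·s·e^{−γ·s·x} · (d·s^{d−1}/t^d) ds. -/
open MeasureTheory Real Filter

lemma gamma_integral_pow (d : ℕ) :
    ∫ u in Set.Ioi (0:ℝ), u ^ d * Real.exp (-u) = (Nat.factorial d : ℝ) := by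
  have h := Real.Gamma_eq_integral (s := (d:ℝ) + 1) (by positivity)
  rw [Real.Gamma_nat_eq_factorial] at h
  rw [h]
  refine setIntegral_congr_fun measurableSet_Ioi (fun x hx => ?_)
  rw [show (d:ℝ) + 1 - 1 = (d:ℝ) by ring, Real.rpow_natCast]
  ring

lemma gamma_integrable_pow (d : ℕ) :
    IntegrableOn (fun u : ℝ => u ^ d * Real.exp (-u)) (Set.Ioi 0) := by
  have h := Real.GammaIntegral_convergent (s := (d:ℝ) + 1) (by positivity)
  refine h.congr_fun (fun x hx => ?_) measurableSet_Ioi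
  beta_reduce; rw [show (d:ℝ) + 1 - 1 = (d:ℝ) by ring, Real.rpow_natCast]
  ring

/-- Power-law tail asymptotics of the typical I-segment length density:
`x^{d+1} · p_d(x) → d · d! / (γ t)^d` as `x → ∞`. -/
theorem stit_Isegment_density_tail_asymptotics
    (d : ℕ) (hd : 2 ≤ d) (t γ : ℝ) (ht : 0 < t) (hγ : 0 < γ) :
    Filter.Tendsto
      (fun x : ℝ => x ^ (d + 1) *
        ∫ s in (0:ℝ)..t, γ * s * Real.exp (-(γ * s * x)) * (d * s ^ (d - 1) / t ^ d))
      Filter.atTop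
      (nhds ((d : ℝ) * (Nat.factorial d : ℝ) / (γ * t) ^ d)) := by
  -- the incomplete Gamma integral tends to `d!`
  have hI : Tendsto (fun y : ℝ => ∫ u in (0:ℝ)..y, u ^ d * Real.exp (-u)) atTop
      (nhds ((Nat.factorial d : ℝ))) := by
    rw [← gamma_integral_pow d]
    exact intervalIntegral_tendsto_integral_Ioi 0 (gamma_integrable_pow d) tendsto_id
  have hcomp : Tendsto (fun x : ℝ => γ * t * x) atTop atTop :=
    Tendsto.const_mul_atTop (mul_pos hγ ht) tendsto_id
  have key : Tendsto
      (fun x : ℝ => (d:ℝ) / (γ*t)^d * ∫ u in (0:ℝ)..(γ*t*x), u ^ d * Real.exp (-u))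
      atTop (nhds ((d : ℝ) * (Nat.factorial d : ℝ) / (γ * t) ^ d)) := by
    have := (hI.comp hcomp).const_mul ((d:ℝ) / (γ*t)^d)
    convert this using 2
    all_goals first | rfl | ring
  refine key.congr' ?_
  filter_upwards [eventually_gt_atTop (0:ℝ)] with x hx
  have hγx : γ * x ≠ 0 := by positivity
  -- rewrite integrand as constant times `g (γ*x*s)` with `g u = u^d * exp(-u)`
  have hint : (∫ s in (0:ℝ)..t, γ * s * Real.exp (-(γ * s * x)) * (d * s ^ (d - 1) / t ^ d))
      = ((d:ℝ) * γ / (t ^ d * (γ*x)^d)) *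
        ∫ s in (0:ℝ)..t, ((γ*x) * s) ^ d * Real.exp (-((γ*x) * s)) := by
    rw [← intervalIntegral.integral_const_mul]
    refine intervalIntegral.integral_congr (fun s _ => ?_)
    have hsd : s ^ d = s * s ^ (d - 1) := by
      conv_lhs => rw [show d = (d-1) + 1 by omega]
      rw [pow_succ]
      ring
    have he : Real.exp (-((γ*x) * s)) = Real.exp (-(γ * s * x)) := by ring_nf
    rw [he, show ((γ*x) * s) ^ d = γ^d * x^d * s^d by rw [mul_pow, mul_pow], hsd]
    field_simp
    ring
  rw [intervalIntegral.integral_comp_mul_left (fun u => u ^ d * Real.exp (-u)) hγx,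
    mul_zero, show γ * x * t = γ * t * x by ring] at hint
  rw [hint, smul_eq_mul]
  have hxd : (γ*x)^d ≠ 0 := by positivity
  field_simp
  ring
end
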